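/- Let R be an integrally closed integral domain. The following are equivalent: (1) every ideal of R is a big ideal (i.e. R is a big ideal domain); (2) every finitely generated ideal of R is a big ideal; (3) R is a Prüfer domain. -/

import Mathlib

/-- An ideal `I` of a commutative ring `R` is a *big ideal* if whenever `J ⊊ I`,
`J ^ n ⊊ I ^ n` for every positive integer `n`. -/
def Ideal.IsBig {R : Type*} [CommRing R] (I : Ideal R) : Prop :=
  ∀ J : Ideal R, J < I → ∀ n : ℕ, 1 ≤ n → J ^ n < I ^ n

/-- A commutative ring is a *big ideal ring* if every ideal is a big ideal. -/
def IsBigIdealRing (R : Type*) [CommRing R] : Prop :=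
  ∀ I : Ideal R, I.IsBig

/-- An integral domain is a *Prüfer domain* if every nonzero finitely generated ideal
is invertible (as a fractional ideal). -/
def IsPruferDomain (R : Type*) [CommRing R] [IsDomain R] : Prop :=
  ∀ I : Ideal R, I.FG → I ≠ ⊥ →
    IsUnit (I : FractionalIdeal (nonZeroDivisors R) (FractionRing R))

set_option linter.unusedSectionVars false

section auxcomm
variable {R : Type*} [CommRing R]

lemma aux_pow_add_le (P Q : Ideal R) (n : ℕ) :
    (P + Q) ^ (n+1) ≤ P * (P + Q) ^ n + Q ^ (n+1) := by
  induction n with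
  | zero => simp [pow_one]
  | succ n ih =>
    calc (P + Q) ^ (n+2) = (P + Q) ^ (n+1) * (P + Q) := by rw [pow_succ]
    _ ≤ (P * (P + Q) ^ n + Q ^ (n+1)) * (P + Q) := Ideal.mul_mono_left ih
    _ = P * ((P + Q) ^ n * (P + Q)) + Q ^ (n+1) * P + Q ^ (n+1) * Q := by ring
    _ ≤ P * (P + Q) ^ (n+1) + Q ^ (n+2) := by
        rw [← pow_succ, ← pow_succ, Submodule.add_eq_sup, Submodule.add_eq_sup,
          Submodule.add_eq_sup]
        refine sup_le (sup_le le_sup_left ?_) le_sup_right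
        refine le_trans ?_ le_sup_left
        rw [mul_comm]
        exact Ideal.mul_mono_right (Ideal.pow_right_mono le_sup_right _)

lemma aux_exists_fg (J : Ideal R) (n : ℕ) (x : R) (hx : x ∈ J ^ n) :
    ∃ J₀ : Ideal R, J₀ ≤ J ∧ J₀.FG ∧ x ∈ J₀ ^ n := by
  induction n generalizing x with
  | zero => exact ⟨⊥, bot_le, ⟨∅, by simp⟩, by simpa using hx⟩
  | succ n ih =>
    rw [pow_succ] at hx
    refine Submodule.mul_induction_on hx ?_ ?_
    · rintro m hm y hy
      obtain ⟨J₀, hle, hfg, hm0⟩ := ih m hm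
      refine ⟨J₀ + Ideal.span {y}, ?_, ?_, ?_⟩
      · exact sup_le hle ((Ideal.span_le).2 (by simpa using hy))
      · exact Submodule.FG.sup hfg (Submodule.fg_span (Set.finite_singleton y))
      · rw [pow_succ]
        exact Ideal.mul_mem_mul (Ideal.pow_right_mono le_sup_left n hm0)
          (le_sup_right (a := J₀) (Ideal.subset_span (by simp)))
    · rintro x y ⟨J₀, h0, hf0, hx0⟩ ⟨J₁, h1, hf1, hx1⟩
      refine ⟨J₀ + J₁, sup_le h0 h1, Submodule.FG.sup hf0 hf1, ?_⟩
      exact Submodule.add_mem _ (Ideal.pow_right_mono le_sup_left _ hx0)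
        (Ideal.pow_right_mono le_sup_right _ hx1)

lemma aux_stepA (h2 : ∀ I : Ideal R, I.FG → I.IsBig) (a b : R) :
    a^2*b^2 ∈ Ideal.span ({a^4, a^3*b, a*b^3, b^4} : Set R) := by
  set S : Set R := {a^4, a^3*b, a*b^3, b^4} with hS
  set J : Ideal R := Ideal.span S with hJ
  set I : Ideal R := Ideal.span (insert (a^2*b^2) S) with hI
  have hJI : J ≤ I := Ideal.span_mono (Set.subset_insert _ _)
  have m1 : (a^4 : R) ∈ J := Ideal.subset_span (by simp [hS])
  have m2 : (a^3*b : R) ∈ J := Ideal.subset_span (by simp [hS])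
  have m3 : (a*b^3 : R) ∈ J := Ideal.subset_span (by simp [hS])
  have m4 : (b^4 : R) ∈ J := Ideal.subset_span (by simp [hS])
  have k2 : (a:R)^2*b^6 ∈ J^2 := by
    rw [show (a:R)^2*b^6 = (a*b^3)*(a*b^3) by ring, sq]; exact Ideal.mul_mem_mul m3 m3
  have k3 : (a:R)^3*b^5 ∈ J^2 := by
    rw [show (a:R)^3*b^5 = (a^3*b)*b^4 by ring, sq]; exact Ideal.mul_mem_mul m2 m4
  have k4 : (a:R)^4*b^4 ∈ J^2 := by
    rw [show (a:R)^4*b^4 = (a^3*b)*(a*b^3) by ring, sq]; exact Ideal.mul_mem_mul m2 m3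
  have k5 : (a:R)^5*b^3 ∈ J^2 := by
    rw [show (a:R)^5*b^3 = a^4*(a*b^3) by ring, sq]; exact Ideal.mul_mem_mul m1 m3
  have k6 : (a:R)^6*b^2 ∈ J^2 := by
    rw [show (a:R)^6*b^2 = (a^3*b)*(a^3*b) by ring, sq]; exact Ideal.mul_mem_mul m2 m2
  set M : Ideal R := Ideal.span {a^2*b^2} with hM
  have hIJM : I = M + J := by rw [hI, Ideal.span_insert, hM, hJ, Submodule.add_eq_sup]
  have hMM : M*M ≤ J^2 := by
    rw [hM, Ideal.span_mul_span', Set.singleton_mul_singleton, Ideal.span_le,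
      Set.singleton_subset_iff]
    exact (show ((a:R)^2*b^2*(a^2*b^2)) = a^4*b^4 by ring) ▸ k4
  have hMJ : M*J ≤ J^2 := by
    rw [hM, hJ, Ideal.span_mul_span', Ideal.span_le]
    rintro x hx
    rw [Set.mem_mul] at hx
    obtain ⟨p, hp, q, hq, rfl⟩ := hx
    rw [Set.mem_singleton_iff] at hp
    subst hp
    simp only [hS, Set.mem_insert_iff, Set.mem_singleton_iff] at hq
    rcases hq with rfl|rfl|rfl|rfl
    · exact (show ((a:R)^2*b^2*(a^4)) = a^6*b^2 by ring) ▸ k6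
    · exact (show ((a:R)^2*b^2*(a^3*b)) = a^5*b^3 by ring) ▸ k5
    · exact (show ((a:R)^2*b^2*(a*b^3)) = a^3*b^5 by ring) ▸ k3
    · exact (show ((a:R)^2*b^2*(b^4)) = a^2*b^6 by ring) ▸ k2
  have hsq : I^2 ≤ J^2 := by
    have e : I^2 = M*M + M*J + (J*M + J*J) := by rw [hIJM]; ring
    rw [e, Submodule.add_eq_sup, Submodule.add_eq_sup, Submodule.add_eq_sup]
    refine sup_le (sup_le hMM hMJ) (sup_le ?_ ?_)
    · rw [mul_comm]; exact hMJ
    · rw [← sq]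
  by_contra hmem
  have hlt : J < I := lt_of_le_of_ne hJI (by
    intro h
    exact hmem (h ▸ Ideal.subset_span (Set.mem_insert _ _)))
  have hfin : (insert (a^2*b^2) S).Finite := Set.toFinite _
  have := h2 I (Submodule.fg_span hfin) J hlt 2 one_le_two
  exact this.not_ge hsq


end auxcomm

section auxdomain
variable {R : Type*} [CommRing R] [IsDomain R]

lemma aux_stab {R K : Type*} [CommRing R] [CommRing K] [Algebra R K] (s : Set K) (x : K)
    (h : ∀ g ∈ s, x * g ∈ Submodule.span R s) :
    ∀ n ∈ Submodule.span R s, x • n ∈ Submodule.span R s := by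
  intro n hn
  induction hn using Submodule.span_induction with
  | mem g hg => rw [smul_eq_mul]; exact h g hg
  | zero => rw [smul_zero]; exact zero_mem _
  | add y z _ _ hy hz => rw [smul_add]; exact add_mem hy hz
  | smul c y _ hy => rw [smul_comm]; exact Submodule.smul_mem _ _ hy

set_option maxHeartbeats 1000000 in
lemma aux_stepB [IsIntegrallyClosed R]
    (hA : ∀ a b : R, a^2*b^2 ∈ Ideal.span ({a^4, a^3*b, a*b^3, b^4} : Set R))
    (a b : R) (hb : b ≠ 0) :
    IsUnit ((Ideal.span {a, b} : Ideal R) :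
      FractionalIdeal (nonZeroDivisors R) (FractionRing R)) := by
  classical
  set K := FractionRing R with hK
  set f : R →+* K := (algebraMap R K : R →+* K) with hf
  have hinj : Function.Injective f := IsFractionRing.injective R K
  have hfb : f b ≠ 0 := fun h => hb (hinj (by simpa using h))
  -- extract the quartic relation
  obtain ⟨r, z1, hz1, he1⟩ := Ideal.mem_span_insert.mp (hA a b)
  obtain ⟨s, z2, hz2, he2⟩ := Ideal.mem_span_insert.mp hz1
  obtain ⟨t, z3, hz3, he3⟩ := Ideal.mem_span_insert.mp hz2
  obtain ⟨u, rfl⟩ := Ideal.mem_span_singleton.mp hz3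
  have hrel0 : a^2*b^2 = r*a^4 + s*(a^3*b) + t*(a*b^3) + u*b^4 := by
    rw [he1, he2, he3]; ring
  set θ : K := f a / f b with hθ
  have hfa : f a = θ * f b := (div_mul_cancel₀ (f a) hfb).symm
  have hKrel : (f a)^2*(f b)^2 = f r*(f a)^4 + f s*((f a)^3*(f b))
      + f t*((f a)*(f b)^3) + f u*(f b)^4 := by
    have := congrArg f hrel0
    simpa only [map_add, map_mul, map_pow] using this
  have hrel : f r * θ^4 + f s * θ^3 - θ^2 + f t * θ + f u = 0 := by
    have hb4 : (f b)^4 ≠ 0 := pow_ne_zero _ hfb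
    rw [hfa] at hKrel
    have hz : (f r * θ^4 + f s * θ^3 - θ^2 + f t * θ + f u) * (f b)^4 = 0 := by
      linear_combination (norm := ring1) -hKrel
    exact (mul_eq_zero.mp hz).resolve_right hb4
  -- the submodule spanned by 1, θ, θ², θ³
  set T : Set K := {1, θ, θ^2, θ^3} with hT
  set M : Submodule R K := Submodule.span R T with hMdef
  have m0 : (1:K) ∈ M := Submodule.subset_span (by simp [hT])
  have m1 : θ ∈ M := Submodule.subset_span (by simp [hT])
  have m2 : θ^2 ∈ M := Submodule.subset_span (by simp [hT])
  have m3 : θ^3 ∈ M := Submodule.subset_span (by simp [hT])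
  have hMne : M ≠ ⊥ := by
    intro h
    rw [h] at m0
    exact one_ne_zero ((Submodule.mem_bot R).mp m0)
  have hMfg : M.FG := Submodule.fg_span (Set.toFinite _)
  have hcomb : ∀ c0 c1 c2 c3 : R, f c0 + f c1 * θ + f c2 * θ^2 + f c3 * θ^3 ∈ M := by
    intro c0 c1 c2 c3
    have e0 : f c0 = c0 • (1:K) := by rw [Algebra.smul_def, mul_one]
    have e1 : f c1 * θ = c1 • θ := by rw [Algebra.smul_def]
    have e2 : f c2 * θ^2 = c2 • θ^2 := by rw [Algebra.smul_def]
    have e3 : f c3 * θ^3 = c3 • θ^3 := by rw [Algebra.smul_def]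
    rw [e0, e1, e2, e3]
    exact add_mem (add_mem (add_mem (Submodule.smul_mem _ _ m0) (Submodule.smul_mem _ _ m1))
      (Submodule.smul_mem _ _ m2)) (Submodule.smul_mem _ _ m3)
  set d1 : K := f r * θ + f s with hd1
  set d2 : K := f r * θ^2 + f s * θ - 1 with hd2
  set d3 : K := f r * θ^3 + f s * θ^2 - θ + f t with hd3
  have hgen : ∀ x : K,
      (x * 1 ∈ M) → (x * θ ∈ M) → (x * θ^2 ∈ M) → (x * θ^3 ∈ M) → IsIntegral R x := by
    intro x h0 h1 h2 h3
    refine isIntegral_of_smul_mem_submodule M hMne hMfg x (aux_stab T x ?_)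
    rintro g hg
    rw [hT] at hg
    simp only [Set.mem_insert_iff, Set.mem_singleton_iff] at hg
    rcases hg with rfl|rfl|rfl|rfl
    · exact h0
    · exact h1
    · exact h2
    · exact h3
  have memM : ∀ (x : K) (c0 c1 c2 c3 : R),
      x = f c0 + f c1 * θ + f c2 * θ^2 + f c3 * θ^3 → x ∈ M := by
    rintro x c0 c1 c2 c3 rfl; exact hcomb c0 c1 c2 c3
  have hi1 : IsIntegral R d1 := by
    refine hgen d1 (memM _ s r 0 0 ?_) (memM _ 0 s r 0 ?_) (memM _ 0 0 s r ?_)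
      (memM _ (-u) (-t) 1 0 ?_)
    · simp only [hd1, map_neg, map_one, map_zero]; ring1
    · simp only [hd1, map_neg, map_one, map_zero]; ring1
    · simp only [hd1, map_neg, map_one, map_zero]; ring1
    · simp only [hd1, map_neg, map_one, map_zero]
      linear_combination (norm := ring1) hrel
  have hi2 : IsIntegral R d2 := by
    refine hgen d2 (memM _ (-1) s r 0 ?_) (memM _ 0 (-1) s r ?_) (memM _ (-u) (-t) 0 0 ?_)
      (memM _ 0 (-u) (-t) 0 ?_)
    · simp only [hd2, map_neg, map_one, map_zero]; ring1
    · simp only [hd2, map_neg, map_one, map_zero]; ring1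
    · simp only [hd2, map_neg, map_one, map_zero]
      linear_combination (norm := ring1) hrel
    · simp only [hd2, map_neg, map_one, map_zero]
      linear_combination (norm := ring1) θ * hrel
  have hi3 : IsIntegral R d3 := by
    refine hgen d3 (memM _ t (-1) s r ?_) (memM _ (-u) 0 0 0 ?_) (memM _ 0 (-u) 0 0 ?_)
      (memM _ 0 0 (-u) 0 ?_)
    · simp only [hd3, map_neg, map_one, map_zero]; ring1
    · simp only [hd3, map_neg, map_one, map_zero]
      linear_combination (norm := ring1) hrel
    · simp only [hd3, map_neg, map_one, map_zero]
      linear_combination (norm := ring1) θ * hrel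
    · simp only [hd3, map_neg, map_one, map_zero]
      linear_combination (norm := ring1) θ^2 * hrel
  obtain ⟨p, hp⟩ := IsIntegrallyClosed.isIntegral_iff.mp hi1
  obtain ⟨q, hq⟩ := IsIntegrallyClosed.isIntegral_iff.mp hi2
  obtain ⟨w, hw⟩ := IsIntegrallyClosed.isIntegral_iff.mp hi3
  -- now build the inverse fractional ideal
  set Frac := FractionalIdeal (nonZeroDivisors R) K with hFrac
  set N : Frac := FractionalIdeal.spanSingleton (nonZeroDivisors R) (f p / f b)
    + FractionalIdeal.spanSingleton (nonZeroDivisors R) (f q / f b) with hN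
  have hv1 : f a * (f p / f b) = f (q + 1) := by
    rw [map_add, map_one, hq, hp, hd1, hd2, hfa]
    letI : Field K := FractionRing.field R
    field_simp
    ring
  have hv2 : f a * (f q / f b) = f (w - t) := by
    rw [map_sub, hq, hw, hd2, hd3, hfa]
    letI : Field K := FractionRing.field R
    field_simp
    ring
  have hv3 : f b * (f p / f b) = f p := by letI : Field K := FractionRing.field R; field_simp
  have hv4 : f b * (f q / f b) = f q := by letI : Field K := FractionRing.field R; field_simp
  have hsplit : ((Ideal.span {a, b} : Ideal R) : Frac)
      = FractionalIdeal.spanSingleton (nonZeroDivisors R) (f a)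
        + FractionalIdeal.spanSingleton (nonZeroDivisors R) (f b) := by
    rw [show ({a, b} : Set R) = insert a {b} from rfl, Ideal.span_insert,
      FractionalIdeal.coeIdeal_sup, FractionalIdeal.coeIdeal_span_singleton,
      FractionalIdeal.coeIdeal_span_singleton]
  have hprod : ((Ideal.span {a, b} : Ideal R) : Frac) * N
      = ((Ideal.span ({q + 1, w - t, p, q} : Set R) : Ideal R) : Frac) := by
    rw [hsplit, hN, add_mul, mul_add, mul_add,
      FractionalIdeal.spanSingleton_mul_spanSingleton,
      FractionalIdeal.spanSingleton_mul_spanSingleton,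
      FractionalIdeal.spanSingleton_mul_spanSingleton,
      FractionalIdeal.spanSingleton_mul_spanSingleton,
      hv1, hv2, hv3, hv4,
      show ({q + 1, w - t, p, q} : Set R) = insert (q+1) (insert (w-t) (insert p {q})) from rfl,
      Ideal.span_insert, Ideal.span_insert, Ideal.span_insert,
      FractionalIdeal.coeIdeal_sup, FractionalIdeal.coeIdeal_sup, FractionalIdeal.coeIdeal_sup,
      FractionalIdeal.coeIdeal_span_singleton, FractionalIdeal.coeIdeal_span_singleton,
      FractionalIdeal.coeIdeal_span_singleton, FractionalIdeal.coeIdeal_span_singleton]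
    ring
  have hEtop : Ideal.span ({q + 1, w - t, p, q} : Set R) = ⊤ := by
    rw [Ideal.eq_top_iff_one]
    have h1 : (q + 1 : R) ∈ Ideal.span ({q + 1, w - t, p, q} : Set R) :=
      Ideal.subset_span (by simp)
    have h2 : (q : R) ∈ Ideal.span ({q + 1, w - t, p, q} : Set R) :=
      Ideal.subset_span (by simp)
    simpa using sub_mem h1 h2
  rw [hEtop, FractionalIdeal.coeIdeal_top] at hprod
  exact IsUnit.of_mul_eq_one _ hprod

lemma aux_principal (a : R) (ha : a ≠ 0) :
    IsUnit ((Ideal.span {a} : Ideal R) :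
      FractionalIdeal (nonZeroDivisors R) (FractionRing R)) := by
  set K := FractionRing R
  have hfa : algebraMap R K a ≠ 0 := by
    simpa using (map_ne_zero_iff _ (IsFractionRing.injective R K)).mpr ha
  rw [FractionalIdeal.coeIdeal_span_singleton]
  refine IsUnit.of_mul_eq_one
    (FractionalIdeal.spanSingleton (nonZeroDivisors R) (algebraMap R K a)⁻¹) ?_
  rw [FractionalIdeal.spanSingleton_mul_spanSingleton, mul_inv_cancel₀ hfa,
    FractionalIdeal.spanSingleton_one]

lemma aux_ideal_identity (A B C : Ideal R) :
    (A + B) * (A + C) * (B + C) = (A + B + C) * (A*B + A*C + B*C) := by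
  have e1 : (A + B) * (A + C) * (B + C)
      = (A + B + C) * (A*B + A*C) + (B*(B*C) + (B*C)*C) := by ring
  have e2 : (A + B + C) * (A*B + A*C + B*C)
      = (A + B + C) * (A*B + A*C) + (A*(B*C) + (B*(B*C) + (B*C)*C)) := by ring
  rw [e1, e2]
  have h : A*(B*C) ≤ (A + B + C) * (A*B + A*C) := by
    have : A*(B*C) = C*(A*B) := by ring
    rw [this]
    exact Ideal.mul_mono le_sup_right le_sup_left
  simp only [Submodule.add_eq_sup]
  exact le_antisymm (sup_le le_sup_left (le_trans le_sup_right le_sup_right))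
    (sup_le le_sup_left (sup_le (h.trans le_sup_left) le_sup_right))

lemma aux_three_one (hP : IsPruferDomain R) :
    ∀ I : Ideal R, ∀ J : Ideal R, J < I → ∀ n : ℕ, 1 ≤ n → J ^ n < I ^ n := by
  intro I J hJI n hn
  refine lt_of_le_of_ne (Ideal.pow_right_mono hJI.le n) ?_
  intro heq
  have hIJ : I ≤ J := by
    intro a haI
    by_cases ha0 : a = 0
    · exact ha0 ▸ J.zero_mem
    have han : a^n ∈ J^n := by rw [heq]; exact Ideal.pow_mem_pow haI n
    obtain ⟨J₀, hJ₀le, hfg, hmem⟩ := aux_exists_fg J n (a^n) han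
    set Kid : Ideal R := J₀ + Ideal.span {a} with hKid
    have haK : a ∈ Kid := Ideal.mem_sup_right (Ideal.subset_span (Set.mem_singleton a))
    have hKfg : Kid.FG := Submodule.FG.sup hfg (Submodule.fg_span (Set.finite_singleton a))
    have hKne : Kid ≠ ⊥ := by
      intro h
      rw [h] at haK
      exact ha0 ((Submodule.mem_bot R).mp haK)
    have hu := hP Kid hKfg hKne
    obtain ⟨m, rfl⟩ : ∃ m, n = m + 1 := ⟨n-1, by omega⟩
    have hle : Kid^(m+1) ≤ J₀ * Kid^m := by
      refine le_trans (aux_pow_add_le J₀ (Ideal.span {a}) m) ?_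
      rw [Submodule.add_eq_sup]
      refine sup_le le_rfl ?_
      rw [Ideal.span_singleton_pow]
      rw [Ideal.span_le, Set.singleton_subset_iff]
      have : (J₀:Ideal R)^(m+1) ≤ J₀ * Kid^m := by
        rw [pow_succ']
        exact Ideal.mul_mono_right (Ideal.pow_right_mono le_sup_left m)
      exact this hmem
    have hge : J₀ * Kid^m ≤ Kid^(m+1) := by
      rw [pow_succ']
      exact Ideal.mul_mono_left le_sup_left
    have heq2 : Kid^(m+1) = J₀ * Kid^m := le_antisymm hle hge
    have hcoe := congrArg
      (fun X : Ideal R => (X : FractionalIdeal (nonZeroDivisors R) (FractionRing R))) heq2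
    simp only [FractionalIdeal.coeIdeal_mul, FractionalIdeal.coeIdeal_pow] at hcoe
    have hcan : (Kid : FractionalIdeal (nonZeroDivisors R) (FractionRing R)) = ↑J₀ := by
      refine (hu.pow m).mul_left_cancel ?_
      rw [← pow_succ, hcoe]
      exact mul_comm _ _
    have : Kid = J₀ := FractionalIdeal.coeIdeal_injective hcan
    exact hJ₀le (this ▸ haK)
  exact hJI.not_ge hIJ

lemma aux_listspan
    (hpair : ∀ a b : R, b ≠ 0 → IsUnit ((Ideal.span {a, b} : Ideal R)
      : FractionalIdeal (nonZeroDivisors R) (FractionRing R)))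
    (hprin : ∀ a : R, a ≠ 0 → IsUnit ((Ideal.span {a} : Ideal R)
      : FractionalIdeal (nonZeroDivisors R) (FractionRing R))) :
    ∀ (n : ℕ) (l : List R), l.length ≤ n → l ≠ [] → (∀ x ∈ l, x ≠ 0) →
      IsUnit ((Ideal.span {x | x ∈ l} : Ideal R)
        : FractionalIdeal (nonZeroDivisors R) (FractionRing R)) := by
  have hset : ∀ (y : R) (t : List R), {x : R | x ∈ y :: t} = insert y {x : R | x ∈ t} := by
    intro y t; ext z; simp
  intro n
  induction n with
  | zero =>
    intro l hl hne _
    cases l with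
    | nil => exact absurd rfl hne
    | cons a t => simp at hl
  | succ n ih =>
    intro l hl hne hnz
    match l with
    | [a] =>
      have : {x : R | x ∈ [a]} = ({a} : Set R) := by ext z; simp
      rw [this]
      exact hprin a (hnz a (by simp))
    | [a, b] =>
      have : {x : R | x ∈ [a, b]} = ({a, b} : Set R) := by ext z; simp
      rw [this]
      exact hpair a b (hnz b (by simp))
    | a :: b :: c :: rest =>
      set A : Ideal R := Ideal.span {a} with hA
      set B : Ideal R := Ideal.span {b} with hB
      set C : Ideal R := Ideal.span {x : R | x ∈ c :: rest} with hC
      have hlen : rest.length + 2 ≤ n := by simp at hl; omega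
      have hAB : IsUnit ((A + B : Ideal R)
          : FractionalIdeal (nonZeroDivisors R) (FractionRing R)) := by
        have : A + B = Ideal.span {a, b} := by
          rw [hA, hB, Submodule.add_eq_sup, ← Ideal.span_insert]
        rw [this]
        exact hpair a b (hnz b (by simp))
      have hAC : IsUnit ((A + C : Ideal R)
          : FractionalIdeal (nonZeroDivisors R) (FractionRing R)) := by
        have : Ideal.span {x : R | x ∈ a :: c :: rest} = A + C := by
          rw [hset, Ideal.span_insert, ← hC, Submodule.add_eq_sup]
        rw [← this]
        refine ih (a :: c :: rest) (by simp; omega) (by simp) ?_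
        intro x hx
        refine hnz x ?_
        simp only [List.mem_cons] at hx ⊢
        tauto
      have hBC : IsUnit ((B + C : Ideal R)
          : FractionalIdeal (nonZeroDivisors R) (FractionRing R)) := by
        have : Ideal.span {x : R | x ∈ b :: c :: rest} = B + C := by
          rw [hset, Ideal.span_insert, ← hC, Submodule.add_eq_sup]
        rw [← this]
        refine ih (b :: c :: rest) (by simp; omega) (by simp) ?_
        intro x hx
        refine hnz x ?_
        simp only [List.mem_cons] at hx ⊢
        tauto
      have hsp : Ideal.span {x : R | x ∈ a :: b :: c :: rest} = A + B + C := by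
        rw [hset, Ideal.span_insert, hset, Ideal.span_insert, ← hA, ← hB, ← hC,
          Submodule.add_eq_sup, Submodule.add_eq_sup, sup_assoc]
      rw [hsp]
      have hid := aux_ideal_identity A B C
      have hunit : IsUnit (((A + B) * (A + C) * (B + C) : Ideal R)
          : FractionalIdeal (nonZeroDivisors R) (FractionRing R)) := by
        rw [FractionalIdeal.coeIdeal_mul, FractionalIdeal.coeIdeal_mul]
        exact (hAB.mul hAC).mul hBC
      rw [hid, FractionalIdeal.coeIdeal_mul] at hunit
      exact isUnit_of_mul_isUnit_left hunit


lemma aux_prufer [IsIntegrallyClosed R] (h2 : ∀ I : Ideal R, I.FG → I.IsBig) :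
    IsPruferDomain R := by
  classical
  have hpair : ∀ a b : R, b ≠ 0 → IsUnit ((Ideal.span {a, b} : Ideal R)
      : FractionalIdeal (nonZeroDivisors R) (FractionRing R)) :=
    fun a b hb => aux_stepB (fun a b => aux_stepA h2 a b) a b hb
  intro I hFG hne
  obtain ⟨S, hS⟩ := hFG
  have hfin : ((↑S : Set R) \ ({0} : Set R)).Finite := S.finite_toSet.diff
  set l := hfin.toFinset.toList with hl
  have hmem : ∀ x : R, x ∈ l ↔ x ∈ (↑S : Set R) \ ({0} : Set R) := by
    intro x; rw [hl, Finset.mem_toList, Set.Finite.mem_toFinset]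
  have hsetl : {x : R | x ∈ l} = (↑S : Set R) \ ({0} : Set R) := Set.ext hmem
  have hspan : Ideal.span ((↑S : Set R) \ ({0} : Set R)) = I := by
    rw [← hS]
    refine le_antisymm (Ideal.span_mono Set.diff_subset) ?_
    rw [Ideal.span_le]
    intro x hx
    by_cases hx0 : x = 0
    · subst hx0; exact Submodule.zero_mem _
    · exact Ideal.subset_span ⟨hx, hx0⟩
  have hne' : l ≠ [] := by
    intro h
    apply hne
    have h0 : ((↑S : Set R) \ ({0} : Set R)) = (∅ : Set R) := by
      rw [← hsetl, h]; ext x; simp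
    rw [← hspan, h0, Ideal.span_empty]
  have hnz : ∀ x ∈ l, x ≠ 0 := fun x hx => ((hmem x).1 hx).2
  have hres := aux_listspan hpair (fun a ha => aux_principal a ha)
    l.length l le_rfl hne' hnz
  rwa [hsetl, hspan] at hres

end auxdomain

/-- **Theorem 2.7.** For an integrally closed domain `R`, the following are equivalent:
(1) `R` is a big ideal domain; (2) every finitely generated ideal of `R` is a big ideal;
(3) `R` is a Prüfer domain. -/
theorem bigIdealRing_tfae_of_integrallyClosed (R : Type*) [CommRing R] [IsDomain R]
    [IsIntegrallyClosed R] :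
    List.TFAE [IsBigIdealRing R,
      ∀ I : Ideal R, I.FG → I.IsBig,
      IsPruferDomain R] := by
  tfae_have 1 → 2 := fun h I _ => h I
  tfae_have 2 → 3 := fun h => aux_prufer h
  tfae_have 3 → 1 := fun h I => aux_three_one h I
  tfae_finish
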